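/- Let A, B be N×N real symmetric matrices with eigenvalues λ₁(A) ≤ ... ≤ λ_N(A) and similarly for B, and let f : ℝ → ℝ be 1-Lipschitz. Then |(1/N)∑ᵢ f(λᵢ(A)) - (1/N)∑ᵢ f(λᵢ(B))| ≤ (1/N) ∑ᵢ |σᵢ(A - B)|, where σᵢ(A-B) denote the singular values of A - B (i.e., the bound is (1/N) times the trace norm of A - B). -/

import Mathlib

open Matrix Finset

variable {N : ℕ}

namespace HW

noncomputable def seig {M : Matrix (Fin N) (Fin N) ℝ} (hM : M.IsHermitian) : Fin N → ℝ :=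
  hM.eigenvalues ∘ Tuple.sort hM.eigenvalues

noncomputable def svec {M : Matrix (Fin N) (Fin N) ℝ} (hM : M.IsHermitian) :
    Fin N → EuclideanSpace ℝ (Fin N) :=
  fun i => hM.eigenvectorBasis (Tuple.sort hM.eigenvalues i)

lemma seig_monotone {M : Matrix (Fin N) (Fin N) ℝ} (hM : M.IsHermitian) :
    Monotone (seig hM) := Tuple.monotone_sort _

lemma svec_orthonormal {M : Matrix (Fin N) (Fin N) ℝ} (hM : M.IsHermitian) :
    Orthonormal ℝ (svec hM) :=
  hM.eigenvectorBasis.orthonormal.comp _ (Equiv.injective _)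

lemma mulVec_svec {M : Matrix (Fin N) (Fin N) ℝ} (hM : M.IsHermitian) (i : Fin N) :
    M *ᵥ (svec hM i) = seig hM i • (svec hM i) := hM.mulVec_eigenvectorBasis _

lemma dot_eq_inner (x y : EuclideanSpace ℝ (Fin N)) :
    dotProduct (x : Fin N → ℝ) (y : Fin N → ℝ) = (inner ℝ x y : ℝ) := by
  simp [PiLp.inner_apply, RCLike.inner_apply, dotProduct, mul_comm]

lemma dot_sum_sum {ι : Type*} [Fintype ι] [DecidableEq ι] (v : ι → EuclideanSpace ℝ (Fin N))
    (hv : Orthonormal ℝ v) (c d : ι → ℝ) :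
    dotProduct ((∑ i, c i • v i : EuclideanSpace ℝ (Fin N)) : Fin N → ℝ)
      ((∑ j, d j • v j : EuclideanSpace ℝ (Fin N)) : Fin N → ℝ) = ∑ i, c i * d i := by
  rw [dot_eq_inner, sum_inner]
  simp_rw [inner_sum, real_inner_smul_left, real_inner_smul_right, orthonormal_iff_ite.mp hv]
  simp [mul_comm]

lemma mulVec_sum_smul_svec {M : Matrix (Fin N) (Fin N) ℝ} (hM : M.IsHermitian)
    {ι : Type*} [Fintype ι] (e : ι → Fin N) (c : ι → ℝ) :
    M *ᵥ ((∑ i, c i • svec hM (e i) : EuclideanSpace ℝ (Fin N)) : Fin N → ℝ)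
      = ((∑ i, (c i * seig hM (e i)) • svec hM (e i) : EuclideanSpace ℝ (Fin N)) : Fin N → ℝ) := by
  rw [← M.mulVecLin_apply]
  have : ((∑ i, c i • svec hM (e i) : EuclideanSpace ℝ (Fin N)) : Fin N → ℝ)
      = ∑ i, c i • ((svec hM (e i) : Fin N → ℝ)) := by rw [WithLp.ofLp_sum]; rfl
  rw [this, map_sum, WithLp.ofLp_sum]
  refine Finset.sum_congr rfl fun i _ => ?_
  rw [_root_.map_smul, M.mulVecLin_apply, mulVec_svec, smul_smul, WithLp.ofLp_smul]

def equivIic (k : Fin N) : {i : Fin N // k ≤ i} ≃ Fin (N - k.1) where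
  toFun i := ⟨i.1.1 - k.1, by have h1 := i.1.2; have h2 := Fin.le_def.mp i.2; omega⟩
  invFun j := ⟨⟨j.1 + k.1, by have := j.2; omega⟩, by
    rw [Fin.le_def]; simp⟩
  left_inv i := Subtype.ext (Fin.ext (by have h2 := Fin.le_def.mp i.2; simp; omega))
  right_inv j := Fin.ext (by simp)

def equivIic' (k : Fin N) : {i : Fin N // i ≤ k} ≃ Fin (k.1 + 1) where
  toFun i := ⟨i.1.1, by have h2 := Fin.le_def.mp i.2; omega⟩
  invFun j := ⟨⟨j.1, by have := j.2; have := k.2; omega⟩, by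
    rw [Fin.le_def]; exact Nat.lt_succ_iff.mp j.2⟩
  left_inv i := Subtype.ext (Fin.ext rfl)
  right_inv j := Fin.ext rfl

lemma card_ge (k : Fin N) : Fintype.card {i : Fin N // k ≤ i} = N - k.1 := by
  rw [Fintype.card_congr (equivIic k), Fintype.card_fin]

lemma card_le (k : Fin N) : Fintype.card {i : Fin N // i ≤ k} = k.1 + 1 := by
  rw [Fintype.card_congr (equivIic' k), Fintype.card_fin]


lemma sum_seig {M : Matrix (Fin N) (Fin N) ℝ} (hM : M.IsHermitian) (g : ℝ → ℝ) :
    ∑ i, g (seig hM i) = ∑ i, g (hM.eigenvalues i) :=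
  Equiv.sum_comp (Tuple.sort hM.eigenvalues) (fun i => g (hM.eigenvalues i))

lemma trace_eq_sum_eig {M : Matrix (Fin N) (Fin N) ℝ} (hM : M.IsHermitian) :
    M.trace = ∑ i, hM.eigenvalues i := by
  have h1 : (star (hM.eigenvectorUnitary : Matrix (Fin N) (Fin N) ℝ)) *
      (hM.eigenvectorUnitary : Matrix (Fin N) (Fin N) ℝ) = 1 := hM.eigenvectorUnitary.prop.1
  conv_lhs => rw [hM.spectral_theorem, Unitary.conjStarAlgAut_apply]
  rw [Matrix.trace_mul_cycle, h1, Matrix.one_mul]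
  simp [Matrix.trace_diagonal]

lemma trace_seig {M : Matrix (Fin N) (Fin N) ℝ} (hM : M.IsHermitian) :
    ∑ i, seig hM i = M.trace := by
  rw [trace_eq_sum_eig hM]; exact sum_seig hM id

lemma trace_conj {M : Matrix (Fin N) (Fin N) ℝ} (hM : M.IsHermitian) (d : Fin N → ℝ) :
    ((hM.eigenvectorUnitary : Matrix (Fin N) (Fin N) ℝ) * diagonal d *
      star (hM.eigenvectorUnitary : Matrix (Fin N) (Fin N) ℝ)).trace = ∑ i, d i := by
  have h1 : (star (hM.eigenvectorUnitary : Matrix (Fin N) (Fin N) ℝ)) *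
      (hM.eigenvectorUnitary : Matrix (Fin N) (Fin N) ℝ) = 1 := hM.eigenvectorUnitary.prop.1
  rw [Matrix.trace_mul_cycle, h1, Matrix.one_mul, Matrix.trace_diagonal]

lemma weyl_mono {M M' : Matrix (Fin N) (Fin N) ℝ} (hM : M.IsHermitian) (hM' : M'.IsHermitian)
    (h : (M' - M).PosSemidef) (k : Fin N) : seig hM k ≤ seig hM' k := by
  classical
  set v := svec hM
  set v' := svec hM'
  set V : Submodule ℝ (EuclideanSpace ℝ (Fin N)) :=
    Submodule.span ℝ (Set.range fun i : {i : Fin N // i ≤ k} => v' i.1) with hV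
  set W : Submodule ℝ (EuclideanSpace ℝ (Fin N)) :=
    Submodule.span ℝ (Set.range fun i : {i : Fin N // k ≤ i} => v i.1) with hW
  have honV : Orthonormal ℝ (fun i : {i : Fin N // i ≤ k} => v' i.1) :=
    (svec_orthonormal hM').comp _ Subtype.val_injective
  have honW : Orthonormal ℝ (fun i : {i : Fin N // k ≤ i} => v i.1) :=
    (svec_orthonormal hM).comp _ Subtype.val_injective
  have hdV : Module.finrank ℝ V = k.1 + 1 := by
    rw [hV, finrank_span_eq_card honV.linearIndependent, card_le]
  have hdW : Module.finrank ℝ W = N - k.1 := by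
    rw [hW, finrank_span_eq_card honW.linearIndependent, card_ge]
  -- find nonzero x in V ⊓ W
  have hpos : 0 < Module.finrank ℝ ↥(V ⊓ W) := by
    have hsum := Submodule.finrank_sup_add_finrank_inf_eq V W
    have hle : Module.finrank ℝ ↥(V ⊔ W) ≤ N := by
      simpa [finrank_euclideanSpace] using Submodule.finrank_le (V ⊔ W)
    have hk := k.2
    omega
  haveI : Nontrivial ↥(V ⊓ W) := Module.nontrivial_of_finrank_pos hpos
  obtain ⟨y, hy⟩ := exists_ne (0 : ↥(V ⊓ W))
  set x : EuclideanSpace ℝ (Fin N) := (y : EuclideanSpace ℝ (Fin N)) with hx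
  have hxne : x ≠ 0 := fun hc => hy (Subtype.ext hc)
  have hxV : x ∈ V := y.2.1
  have hxW : x ∈ W := y.2.2
  have hdotpos : 0 < dotProduct (x : Fin N → ℝ) (x : Fin N → ℝ) := by
    rw [dot_eq_inner]
    have h0 : (inner ℝ x x : ℝ) ≠ 0 := fun hc => hxne (inner_self_eq_zero.mp hc)
    exact lt_of_le_of_ne real_inner_self_nonneg (Ne.symm h0)
  -- upper bound from V
  obtain ⟨c, hc⟩ := (Submodule.mem_span_range_iff_exists_fun ℝ).mp hxV
  obtain ⟨d, hd⟩ := (Submodule.mem_span_range_iff_exists_fun ℝ).mp hxW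
  have hub : dotProduct (x : Fin N → ℝ) (M' *ᵥ x) ≤
      seig hM' k * dotProduct (x : Fin N → ℝ) (x : Fin N → ℝ) := by
    rw [← hc, mulVec_sum_smul_svec hM' (fun i : {i : Fin N // i ≤ k} => i.1) c,
      dot_sum_sum _ honV, dot_sum_sum _ honV]
    rw [Finset.mul_sum]
    refine Finset.sum_le_sum fun i _ => ?_
    have h1 : seig hM' i.1 ≤ seig hM' k := seig_monotone hM' i.2
    nlinarith [sq_nonneg (c i)]
  have hlb : seig hM k * dotProduct (x : Fin N → ℝ) (x : Fin N → ℝ) ≤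
      dotProduct (x : Fin N → ℝ) (M *ᵥ x) := by
    rw [← hd, mulVec_sum_smul_svec hM (fun i : {i : Fin N // k ≤ i} => i.1) d,
      dot_sum_sum _ honW, dot_sum_sum _ honW]
    rw [Finset.mul_sum]
    refine Finset.sum_le_sum fun i _ => ?_
    have h1 : seig hM k ≤ seig hM i.1 := seig_monotone hM i.2
    nlinarith [sq_nonneg (d i)]
  have hmid : dotProduct (x : Fin N → ℝ) (M *ᵥ x) ≤ dotProduct (x : Fin N → ℝ) (M' *ᵥ x) := by
    have := h.dotProduct_mulVec_nonneg (x : Fin N → ℝ)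
    rw [star_trivial, sub_mulVec, dotProduct_sub] at this
    linarith
  have := le_trans hlb (le_trans hmid hub)
  exact le_of_mul_le_mul_right (by linarith) hdotpos

end HW

open HW

/-- For real symmetric `N×N` matrices `A, B` and a `1`-Lipschitz `f : ℝ → ℝ`,
`|(1/N)∑ f(λᵢ(A)) - (1/N)∑ f(λᵢ(B))| ≤ (1/N)∑ |λᵢ(A-B)|`, the right side being
`(1/N)` times the trace norm of `A - B` (whose singular values are the absolute
values of its eigenvalues since `A - B` is symmetric). -/
theorem lipschitz_linear_statistic_traceNorm
    {N : ℕ} (A B : Matrix (Fin N) (Fin N) ℝ)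
    (hA : A.IsHermitian) (hB : B.IsHermitian)
    (f : ℝ → ℝ) (hf : LipschitzWith 1 f) :
    |(1 / (N : ℝ)) * (∑ i, f (hA.eigenvalues i))
        - (1 / (N : ℝ)) * (∑ i, f (hB.eigenvalues i))|
      ≤ (1 / (N : ℝ)) * ∑ i, |(hA.sub hB).eigenvalues i| := by
  classical
  have hC : (A - B).IsHermitian := hA.sub hB
  set U : Matrix (Fin N) (Fin N) ℝ := (hC.eigenvectorUnitary : Matrix (Fin N) (Fin N) ℝ) with hU
  set γ : Fin N → ℝ := hC.eigenvalues with hγ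
  set P : Matrix (Fin N) (Fin N) ℝ := U * diagonal (fun i => max (γ i) 0) * star U with hPdef
  set Q : Matrix (Fin N) (Fin N) ℝ := U * diagonal (fun i => max (-γ i) 0) * star U with hQdef
  have hP : P.PosSemidef := by
    rw [hPdef, Matrix.star_eq_conjTranspose]
    exact (Matrix.PosSemidef.diagonal (fun i => le_max_right _ _)).mul_mul_conjTranspose_same U
  have hQ : Q.PosSemidef := by
    rw [hQdef, Matrix.star_eq_conjTranspose]
    exact (Matrix.PosSemidef.diagonal (fun i => le_max_right _ _)).mul_mul_conjTranspose_same U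
  have hdiag : diagonal ((RCLike.ofReal : ℝ → ℝ) ∘ hC.eigenvalues)
      = diagonal (fun i => max (γ i) 0) - diagonal (fun i => max (-γ i) 0) := by
    ext i j
    rcases eq_or_ne i j with h | h
    · subst h
      simp [Matrix.diagonal_apply_eq, max_zero_sub_max_neg_zero_eq_self, hγ]
    · simp [Matrix.diagonal_apply_ne _ h]
  have hCPQ : A - B = P - Q := by
    conv_lhs => rw [hC.spectral_theorem, Unitary.conjStarAlgAut_apply]
    rw [hdiag, Matrix.mul_sub, Matrix.sub_mul]
  have htrP : P.trace = ∑ i, max (γ i) 0 := trace_conj hC _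
  have htrQ : Q.trace = ∑ i, max (-γ i) 0 := trace_conj hC _
  have hBP : (B + P).IsHermitian := hB.add hP.1
  have hAQ : (A + Q).IsHermitian := hA.add hQ.1
  have w1 : ∀ k, seig hA k ≤ seig hBP k := by
    intro k
    refine weyl_mono hA hBP ?_ k
    have : B + P - A = Q := by rw [show Q = P - (A - B) by rw [hCPQ]; abel]; abel
    rw [this]; exact hQ
  have w2 : ∀ k, seig hB k ≤ seig hAQ k := by
    intro k
    refine weyl_mono hB hAQ ?_ k
    have : A + Q - B = P := by rw [show P = (A - B) + Q by rw [hCPQ]; abel]; abel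
    rw [this]; exact hP
  have w3 : ∀ k, seig hB k ≤ seig hBP k := by
    intro k
    refine weyl_mono hB hBP ?_ k
    have : B + P - B = P := by abel
    rw [this]; exact hP
  have w4 : ∀ k, seig hA k ≤ seig hAQ k := by
    intro k
    refine weyl_mono hA hAQ ?_ k
    have : A + Q - A = Q := by abel
    rw [this]; exact hQ
  have key : ∀ k, |f (seig hA k) - f (seig hB k)| ≤
      (seig hBP k - seig hB k) + (seig hAQ k - seig hA k) := by
    intro k
    have lip : |f (seig hA k) - f (seig hB k)| ≤ |seig hA k - seig hB k| := by
      have := hf.dist_le_mul (seig hA k) (seig hB k)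
      simpa [Real.dist_eq] using this
    refine lip.trans ?_
    have h1 := w1 k; have h2 := w2 k; have h3 := w3 k; have h4 := w4 k
    rw [abs_sub_le_iff]
    constructor <;> linarith
  have sum_key : ∑ k, |f (seig hA k) - f (seig hB k)| ≤ ∑ i, |γ i| := by
    calc ∑ k, |f (seig hA k) - f (seig hB k)|
        ≤ ∑ k, ((seig hBP k - seig hB k) + (seig hAQ k - seig hA k)) :=
          Finset.sum_le_sum fun k _ => key k
      _ = (∑ k, seig hBP k - ∑ k, seig hB k) + (∑ k, seig hAQ k - ∑ k, seig hA k) := by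
          rw [Finset.sum_add_distrib, Finset.sum_sub_distrib, Finset.sum_sub_distrib]
      _ = P.trace + Q.trace := by
          rw [trace_seig hBP, trace_seig hAQ, trace_seig hA, trace_seig hB,
            Matrix.trace_add, Matrix.trace_add]
          ring
      _ = ∑ i, |γ i| := by
          rw [htrP, htrQ, ← Finset.sum_add_distrib]
          refine Finset.sum_congr rfl fun i _ => ?_
          rw [max_zero_add_max_neg_zero_eq_abs_self]
  have habs : |∑ i, f (hA.eigenvalues i) - ∑ i, f (hB.eigenvalues i)| ≤ ∑ i, |γ i| := by
    rw [← sum_seig hA f, ← sum_seig hB f, ← Finset.sum_sub_distrib]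
    exact (Finset.abs_sum_le_sum_abs _ _).trans sum_key
  have hN : (0:ℝ) ≤ 1 / (N:ℝ) := by positivity
  calc |(1 / (N : ℝ)) * (∑ i, f (hA.eigenvalues i)) - (1 / (N : ℝ)) * (∑ i, f (hB.eigenvalues i))|
      = (1 / (N:ℝ)) * |∑ i, f (hA.eigenvalues i) - ∑ i, f (hB.eigenvalues i)| := by
        rw [← mul_sub, abs_mul, abs_of_nonneg hN]
    _ ≤ (1 / (N:ℝ)) * ∑ i, |γ i| := mul_le_mul_of_nonneg_left habs hN
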